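/- Let $T : X \to X$ be a map on a set $X$ and let $(f_n)$ be a sequence of real-valued functions on $X$ with $f_{n+m} \leq f_n + f_m \circ T^n$ pointwise. Then for all positive integers $k$ and $n$ with $n \geq 2k$, we have the pointwise inequality $f_n \leq \frac{1}{k}\sum_{s=0}^{n-k} f_k \circ T^s + \frac{1}{k}\sum_{j=0}^{k-1}\big(f_{n-j-\lfloor (n-j)/k\rfloor k}\circ T^{\lfloor (n-j)/k\rfloor k + j} + f_j\big)$, where $f_0 := 0$. -/

import Mathlib

private lemma block_bound {X : Type*} (T : X → X) (f : ℕ → X → ℝ)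
    (h0 : ∀ x, f 0 x = 0)
    (hsub : ∀ m n : ℕ, 1 ≤ m → 1 ≤ n → ∀ x, f (m + n) x ≤ f m x + f n (T^[m] x))
    (k : ℕ) (hk : 1 ≤ k) :
    ∀ q r : ℕ, ∀ y : X,
      f (q * k + r) y ≤ ∑ i ∈ Finset.range q, f k (T^[i * k] y) + f r (T^[q * k] y) := by
  intro q
  induction q with
  | zero => intro r y; simp
  | succ q ih =>
    intro r y
    rcases Nat.eq_zero_or_pos (q * k + r) with h | h
    · have hq : q = 0 := by
        rcases Nat.eq_zero_of_add_eq_zero_right h with h'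
        exact (mul_eq_zero.mp h') |>.resolve_right (by omega)
      have hr : r = 0 := Nat.eq_zero_of_add_eq_zero_left h
      subst hq hr
      simp [h0]
    · have step : f ((q + 1) * k + r) y ≤ f k y + f (q * k + r) (T^[k] y) := by
        have : (q + 1) * k + r = k + (q * k + r) := by ring
        rw [this]
        exact hsub k (q * k + r) hk h y
      have ihy := ih r (T^[k] y)
      have hiter : ∀ m : ℕ, T^[m] (T^[k] y) = T^[m + k] y := by
        intro m; rw [← Function.iterate_add_apply]
      calc f ((q + 1) * k + r) y ≤ f k y + f (q * k + r) (T^[k] y) := step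
        _ ≤ f k y + (∑ i ∈ Finset.range q, f k (T^[i * k] (T^[k] y))
              + f r (T^[q * k] (T^[k] y))) := by linarith
        _ = ∑ i ∈ Finset.range (q + 1), f k (T^[i * k] y) + f r (T^[(q + 1) * k] y) := by
            rw [Finset.sum_range_succ']
            simp only [hiter]
            have h1 : ∀ i : ℕ, i * k + k = (i + 1) * k := by intro i; ring
            have h2 : q * k + k = (q + 1) * k := by ring
            rw [h2]
            simp only [h1, zero_mul, Function.iterate_zero_apply]
            ring

theorem subadditive_block_decomposition {X : Type*} (T : X → X) (f : ℕ → X → ℝ)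
    (h0 : ∀ x, f 0 x = 0)
    (hsub : ∀ m n : ℕ, 1 ≤ m → 1 ≤ n → ∀ x, f (m + n) x ≤ f m x + f n (T^[m] x))
    (k n : ℕ) (hk : 1 ≤ k) (hn : 2 * k ≤ n) (x : X) :
    f n x ≤
      (1 / (k : ℝ)) * ∑ s ∈ Finset.range (n - k + 1), f k (T^[s] x) +
      (1 / (k : ℝ)) * ∑ j ∈ Finset.range k,
        (f (n - j - ((n - j) / k) * k) (T^[((n - j) / k) * k + j] x) + f j x) := by
  have hkR : (0 : ℝ) < (k : ℝ) := by exact_mod_cast hk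
  -- per-j bound
  have perj : ∀ j ∈ Finset.range k,
      f n x ≤ ∑ i ∈ Finset.range ((n - j) / k), f k (T^[i * k + j] x) +
        (f (n - j - ((n - j) / k) * k) (T^[((n - j) / k) * k + j] x) + f j x) := by
    intro j hj
    have hjk : j < k := Finset.mem_range.mp hj
    have hjn : j < n := by omega
    have hdm := Nat.div_add_mod (n - j) k
    have hmod : n - j - ((n - j) / k) * k = (n - j) % k := by
      set t := k * ((n - j) / k) with ht
      have : ((n - j) / k) * k = t := by rw [ht]; ring
      omega
    have hsplit : ((n - j) / k) * k + (n - j) % k = n - j := by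
      set t := k * ((n - j) / k) with ht
      have : ((n - j) / k) * k = t := by rw [ht]; ring
      omega
    have hblock := block_bound T f h0 hsub k hk ((n - j) / k) ((n - j) % k) (T^[j] x)
    rw [hsplit] at hblock
    have hiter : ∀ m : ℕ, T^[m] (T^[j] x) = T^[m + j] x := by
      intro m; rw [← Function.iterate_add_apply]
    simp only [hiter] at hblock
    have hstep : f n x ≤ f (n - j) (T^[j] x) + f j x := by
      rcases Nat.eq_zero_or_pos j with h | h
      · subst h; simp [h0]
      · have : f (j + (n - j)) x ≤ f j x + f (n - j) (T^[j] x) :=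
          hsub j (n - j) h (by omega) x
        rw [show j + (n - j) = n by omega] at this
        linarith
    rw [hmod]
    linarith
  -- sum over j
  have hsum : (k : ℝ) * f n x ≤
      (∑ j ∈ Finset.range k, ∑ i ∈ Finset.range ((n - j) / k), f k (T^[i * k + j] x)) +
      ∑ j ∈ Finset.range k,
        (f (n - j - ((n - j) / k) * k) (T^[((n - j) / k) * k + j] x) + f j x) := by
    have := Finset.sum_le_sum perj
    rw [Finset.sum_const, Finset.sum_add_distrib] at this
    simpa [nsmul_eq_mul] using this
  -- bijection for double sum
  have hbij : (∑ j ∈ Finset.range k, ∑ i ∈ Finset.range ((n - j) / k), f k (T^[i * k + j] x))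
      = ∑ s ∈ Finset.range (n - k + 1), f k (T^[s] x) := by
    rw [Finset.sum_sigma']
    refine Finset.sum_nbij' (fun p => p.2 * k + p.1) (fun s => ⟨s % k, s / k⟩) ?_ ?_ ?_ ?_ ?_
    · rintro ⟨j, i⟩ hp
      simp only [Finset.mem_sigma, Finset.mem_range] at hp
      obtain ⟨hj, hi⟩ := hp
      have : i + 1 ≤ (n - j) / k := hi
      have h1 : (i + 1) * k ≤ n - j := by
        rw [← Nat.le_div_iff_mul_le (by omega)]
        exact this
      simp only [Finset.mem_range]
      set t := i * k with ht
      have : (i + 1) * k = t + k := by rw [ht]; ring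
      omega
    · intro s hs
      simp only [Finset.mem_range] at hs
      simp only [Finset.mem_sigma, Finset.mem_range]
      constructor
      · exact Nat.mod_lt _ (by omega)
      · have hd := Nat.div_add_mod s k
        rw [Nat.lt_iff_add_one_le, Nat.le_div_iff_mul_le (show 0 < k by omega)]
        set t := s / k * k with ht
        have h2 : k * (s / k) = t := by rw [ht]; ring
        have h3 : (s / k + 1) * k = t + k := by rw [ht]; ring
        have h4 : s % k < k := Nat.mod_lt _ (by omega)
        omega
    · rintro ⟨j, i⟩ hp
      simp only [Finset.mem_sigma, Finset.mem_range] at hp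
      obtain ⟨hj, _⟩ := hp
      have h1 : (i * k + j) % k = j := by
        simp [Nat.add_mod, Nat.mul_mod_left, Nat.mod_eq_of_lt hj]
      have h2 : (i * k + j) / k = i := by
        rw [mul_comm, Nat.mul_add_div (by omega), Nat.div_eq_of_lt hj, add_zero]
      simp [h1, h2]
    · intro s hs
      show s / k * k + s % k = s
      rw [mul_comm]
      exact Nat.div_add_mod s k
    · rintro ⟨j, i⟩ _
      rfl
  rw [hbij] at hsum
  rw [← mul_add, one_div_mul_eq_div, le_div_iff₀ hkR]
  linarith
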